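/- Let P be a noncompact locally compact Hausdorff space in which every σ-compact subset has compact closure, and let K = K(P) = (αP × ℕ∞) \ {(∞_P, ∞)}. Let (x_i)_{i∈ℕ} be a sequence in C_b(K) with ‖x_i‖ ≤ 1 for all i, and suppose that for every x ∈ C₀(K) the family of functions (|x_i|²·|x|²)_{i∈ℕ} is summable in the norm of C₀(K) with Σ_{i∈ℕ} |x_i(t)|²·|x(t)|² ≤ |x(t)|² for all t ∈ K (i.e., (x_i) is (C_b(K), C₀(K))-admissible). Then the same conditions hold for every x ∈ C_b(K): the family (|x_i|²·|x|²)_{i∈ℕ} is summable in the norm of C_b(K) (uniform convergence on K) and Σ_{i∈ℕ} |x_i(t)|²·|x(t)|² ≤ |x(t)|² for all t ∈ K; that is, (x_i) is (C_b(K), C_b(K))-admissible. -/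

import Mathlib

open ZeroAtInfty OnePoint BoundedContinuousFunction

/-- `K(P) = (αP × ℕ∞) \ {(∞_P, ∞)}`, where `αP` and `ℕ∞` are the one-point
compactifications of `P` and of `ℕ`, with the subspace topology. -/
abbrev deletedPlank (P : Type*) [TopologicalSpace P] : Type _ :=
  {q : OnePoint P × OnePoint ℕ // q ≠ (∞, ∞)}

section Aux

variable {P : Type*} [TopologicalSpace P]

/-- A point of the deleted plank whose first coordinate lies in `P`. -/
def dpMk (p : P) (n : OnePoint ℕ) : deletedPlank P :=
  ⟨((p : OnePoint P), n), fun h => OnePoint.coe_ne_infty p (congrArg Prod.fst h)⟩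

/-- A point of the deleted plank whose second coordinate lies in `ℕ`. -/
def dpCol (p : OnePoint P) (n : ℕ) : deletedPlank P :=
  ⟨(p, (n : OnePoint ℕ)), fun h => OnePoint.coe_ne_infty n (congrArg Prod.snd h)⟩

lemma continuous_dpMk : Continuous (fun q : P × OnePoint ℕ => dpMk q.1 q.2) :=
  Continuous.subtype_mk
    ((OnePoint.continuous_coe.comp continuous_fst).prodMk continuous_snd) _

lemma continuous_dpCol (n : ℕ) : Continuous (fun p : OnePoint P => dpCol p n) :=
  Continuous.subtype_mk (continuous_id.prodMk continuous_const) _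

lemma star_mul_star_mul (z w : ℂ) :
    star z * z * (star w * w) = (((‖z‖ ^ 2 * ‖w‖ ^ 2 : ℝ)) : ℂ) := by
  simp only [Complex.star_def, RCLike.conj_mul]
  norm_cast

/-- Bump functions in `C₀` on a locally compact Hausdorff space. -/
lemma exists_c0_one_on {X : Type*} [TopologicalSpace X] [LocallyCompactSpace X] [T2Space X]
    {L : Set X} (hL : IsCompact L) : ∃ w : C₀(X, ℂ), ∀ x ∈ L, w x = 1 := by
  obtain ⟨f, hf1, -, hfc, -⟩ :=
    exists_continuous_one_zero_of_isCompact hL isClosed_empty (Set.disjoint_empty _)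
  refine ⟨⟨⟨fun x => (f x : ℂ), Complex.continuous_ofReal.comp f.continuous⟩, ?_⟩, ?_⟩
  · simpa [Function.comp_def] using (Complex.continuous_ofReal.tendsto 0).comp hfc.is_zero_at_infty
  · intro x hx
    simp [hf1 hx]

/-- If a continuous function on `αP` is `> ε` at `∞`, it is `> ε` off a compact set. -/
lemma escape_lemma (g : OnePoint P → ℝ) (hgc : Continuous g) (ε : ℝ) (hmem : ε < g ∞) :
    ∃ C : Set P, IsCompact C ∧ ∀ p : P, p ∉ C → ε < g p := by
  have hU : IsOpen {p : OnePoint P | ε < g p} := isOpen_lt continuous_const hgc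
  have hmem' : ∞ ∈ {p : OnePoint P | ε < g p} := hmem
  obtain ⟨-, hcomp⟩ := (OnePoint.isOpen_iff_of_mem hmem').1 hU
  refine ⟨((↑) ⁻¹' {p : OnePoint P | ε < g p} : Set P)ᶜ, hcomp, ?_⟩
  intro p hp
  have : (p : OnePoint P) ∈ {p : OnePoint P | ε < g p} := by
    by_contra h
    exact hp h
  exact this

/-- The column lemma: the tails are uniformly small along the column `{∞_P} × ℕ`. -/
lemma colLemma [LocallyCompactSpace P] [T2Space P]
    (hnc : ¬ CompactSpace P)
    (hIV : ∀ s : Set P, IsSigmaCompact s → IsCompact (closure s))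
    (X : ℕ → (deletedPlank P →ᵇ ℂ))
    (UC : ∀ L : Set (deletedPlank P), IsCompact L → ∀ ε : ℝ, 0 < ε →
      ∃ N : ℕ, ∀ G : Finset ℕ, (∀ i ∈ G, N ≤ i) → ∀ x ∈ L,
        (∑ i ∈ G, ‖X i x‖ ^ 2) ≤ ε) :
    ∀ ε : ℝ, 0 < ε → ∃ N : ℕ, ∀ G : Finset ℕ, (∀ i ∈ G, N ≤ i) → ∀ n : ℕ,
      (∑ i ∈ G, ‖X i (dpCol ∞ n)‖ ^ 2) ≤ ε := by
  intro ε hε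
  by_contra hcon
  push_neg at hcon
  choose G hG n hn using hcon
  have hC : ∀ N : ℕ, ∃ C : Set P, IsCompact C ∧ ∀ p : P, p ∉ C →
      ε < ∑ i ∈ G N, ‖X i (dpCol (↑p) (n N))‖ ^ 2 := by
    intro N
    have hgc : Continuous (fun p : OnePoint P => ∑ i ∈ G N, ‖X i (dpCol p (n N))‖ ^ 2) := by
      refine continuous_finset_sum _ fun i _ => ?_
      exact (((X i).continuous.comp (continuous_dpCol (n N))).norm).pow 2
    exact escape_lemma _ hgc ε (hn N)
  choose C hCc hCp using hC
  have hsig : IsSigmaCompact (⋃ N, C N) := ⟨C, hCc, rfl⟩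
  have hD : IsCompact (closure (⋃ N, C N)) := hIV _ hsig
  have hex : ∃ p : P, p ∉ closure (⋃ N, C N) := by
    by_contra h
    push_neg at h
    have : (Set.univ : Set P) = closure (⋃ N, C N) :=
      Set.eq_univ_iff_forall.2 h |>.symm
    exact hnc (isCompact_univ_iff.1 (this ▸ hD))
  obtain ⟨p, hp⟩ := hex
  have hLc : IsCompact ((fun m : OnePoint ℕ => dpMk p m) '' Set.univ) := by
    refine IsCompact.image isCompact_univ ?_
    exact Continuous.subtype_mk (continuous_const.prodMk continuous_id) _
  obtain ⟨N₀, hN₀⟩ := UC _ hLc ε hε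
  have hmem : dpCol (↑p) (n N₀) ∈ (fun m : OnePoint ℕ => dpMk p m) '' Set.univ := by
    refine ⟨(↑(n N₀) : OnePoint ℕ), trivial, ?_⟩
    exact Subtype.ext rfl
  have hle := hN₀ (G N₀) (hG N₀) _ hmem
  have hlt := hCp N₀ p (fun hmem' => hp (subset_closure (Set.mem_iUnion.2 ⟨N₀, hmem'⟩)))
  exact absurd hle (not_le.2 hlt)

/-- The main uniform lemma: the tails are uniformly small on all of `K(P)`. -/
lemma mainLemma [LocallyCompactSpace P] [T2Space P]
    (hnc : ¬ CompactSpace P)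
    (hIV : ∀ s : Set P, IsSigmaCompact s → IsCompact (closure s))
    (X : ℕ → (deletedPlank P →ᵇ ℂ))
    (UC : ∀ L : Set (deletedPlank P), IsCompact L → ∀ ε : ℝ, 0 < ε →
      ∃ N : ℕ, ∀ G : Finset ℕ, (∀ i ∈ G, N ≤ i) → ∀ x ∈ L,
        (∑ i ∈ G, ‖X i x‖ ^ 2) ≤ ε) :
    ∀ ε : ℝ, 0 < ε → ∃ N : ℕ, ∀ G : Finset ℕ, (∀ i ∈ G, N ≤ i) →
      ∀ x : deletedPlank P, (∑ i ∈ G, ‖X i x‖ ^ 2) ≤ ε := by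
  have COL := colLemma hnc hIV X UC
  intro ε hε
  by_contra hcon
  push_neg at hcon
  choose G hG x hx using hcon
  have hsc : ∀ N : ℕ, IsCompact {p : P | (x N).val.1 = ↑p} := by
    intro N
    refine Set.Subsingleton.isCompact ?_
    intro p hp q hq
    exact OnePoint.coe_injective (hp.symm.trans hq)
  have hD : IsCompact (closure (⋃ N, {p : P | (x N).val.1 = ↑p})) :=
    hIV _ ⟨_, hsc, rfl⟩
  have hLc : IsCompact ((fun q : P × OnePoint ℕ => dpMk q.1 q.2) ''
      ((closure (⋃ N, {p : P | (x N).val.1 = ↑p})) ×ˢ Set.univ)) :=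
    (hD.prod isCompact_univ).image continuous_dpMk
  obtain ⟨N₁, hN₁⟩ := UC _ hLc ε hε
  obtain ⟨N₂, hN₂⟩ := COL ε hε
  have hGN : ∀ i ∈ G (max N₁ N₂), N₁ ≤ i :=
    fun i hi => le_trans (le_max_left _ _) (hG (max N₁ N₂) i hi)
  have hGN' : ∀ i ∈ G (max N₁ N₂), N₂ ≤ i :=
    fun i hi => le_trans (le_max_right _ _) (hG (max N₁ N₂) i hi)
  rcases eq_or_ne ((x (max N₁ N₂)).val.1) ∞ with hq | hq
  · -- column case
    have hq2 : (x (max N₁ N₂)).val.2 ≠ ∞ := by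
      intro h2
      exact (x (max N₁ N₂)).prop (Prod.ext hq h2)
    obtain ⟨m, hm⟩ := OnePoint.ne_infty_iff_exists.1 hq2
    have hxeq : x (max N₁ N₂) = dpCol ∞ m := Subtype.ext (Prod.ext hq hm.symm)
    have hle := hN₂ (G (max N₁ N₂)) hGN' m
    rw [← hxeq] at hle
    exact absurd hle (not_le.2 (hx (max N₁ N₂)))
  · -- interior case
    obtain ⟨p, hpq⟩ := OnePoint.ne_infty_iff_exists.1 hq
    have hpD : p ∈ closure (⋃ N, {p : P | (x N).val.1 = ↑p}) :=
      subset_closure (Set.mem_iUnion.2 ⟨max N₁ N₂, hpq.symm⟩)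
    have hxmem : x (max N₁ N₂) ∈ (fun q : P × OnePoint ℕ => dpMk q.1 q.2) ''
        ((closure (⋃ N, {p : P | (x N).val.1 = ↑p})) ×ˢ Set.univ) := by
      refine ⟨(p, (x (max N₁ N₂)).val.2), ⟨hpD, trivial⟩, ?_⟩
      exact Subtype.ext (Prod.ext hpq rfl)
    have hle := hN₁ (G (max N₁ N₂)) hGN _ hxmem
    exact absurd hle (not_le.2 (hx (max N₁ N₂)))

end Aux

/-- Let `P` be a noncompact locally compact Hausdorff space in which every `σ`-compact
subset has compact closure, and `K = (αP × ℕ∞) \ {(∞_P, ∞)}`. If a sequence `(X i)` in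
`C_b(K)` with `‖X i‖ ≤ 1` is `(C_b(K), C₀(K))`-admissible, i.e. for every `x ∈ C₀(K)` the
family of functions `(|X i|² · |x|²)` is summable in the norm of `C₀(K)` with
`∑' i, ‖X i t‖² · ‖x t‖² ≤ ‖x t‖²` for all `t`, then the same holds for every
`x ∈ C_b(K)`: the sequence is `(C_b(K), C_b(K))`-admissible. -/
theorem admissible_C0_iff_Cb
    (P : Type*) [TopologicalSpace P] [LocallyCompactSpace P] [T2Space P]
    (hnc : ¬ CompactSpace P)
    (hIV : ∀ s : Set P, IsSigmaCompact s → IsCompact (closure s))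
    (X : ℕ → (deletedPlank P →ᵇ ℂ))
    (hnorm : ∀ i : ℕ, ‖X i‖ ≤ 1)
    (hadm : ∀ v : C₀(deletedPlank P, ℂ),
      Summable (fun i : ℕ => star (X i) * X i * (star v.toBCF * v.toBCF)) ∧
      ∀ t : deletedPlank P, (∑' i : ℕ, ‖X i t‖ ^ 2 * ‖v t‖ ^ 2) ≤ ‖v t‖ ^ 2) :
    ∀ v : deletedPlank P →ᵇ ℂ,
      Summable (fun i : ℕ => star (X i) * X i * (star v * v)) ∧
      ∀ t : deletedPlank P, (∑' i : ℕ, ‖X i t‖ ^ 2 * ‖v t‖ ^ 2) ≤ ‖v t‖ ^ 2 := by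
  classical
  haveI : LocallyCompactSpace (deletedPlank P) := by
    have h : IsOpen {q : OnePoint P × OnePoint ℕ | q ≠ (∞, ∞)} := isOpen_ne
    exact h.locallyCompactSpace
  -- evaluation of the finite sums
  have hev : ∀ (w : deletedPlank P →ᵇ ℂ) (G : Finset ℕ) (x : deletedPlank P),
      (∑ i ∈ G, (star (X i) * X i * (star w * w))) x
        = ((∑ i ∈ G, ‖X i x‖ ^ 2 * ‖w x‖ ^ 2 : ℝ) : ℂ) := by
    intro w G x
    rw [BoundedContinuousFunction.sum_apply]
    push_cast
    refine Finset.sum_congr rfl fun i _ => ?_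
    simp only [BoundedContinuousFunction.mul_apply, BoundedContinuousFunction.star_apply]
    rw [star_mul_star_mul]
    push_cast
    ring
  -- uniform convergence on compact subsets
  have UC : ∀ L : Set (deletedPlank P), IsCompact L → ∀ ε : ℝ, 0 < ε →
      ∃ N : ℕ, ∀ G : Finset ℕ, (∀ i ∈ G, N ≤ i) → ∀ x ∈ L,
        (∑ i ∈ G, ‖X i x‖ ^ 2) ≤ ε := by
    intro L hL ε hε
    obtain ⟨w, hw⟩ := exists_c0_one_on hL
    obtain ⟨s, hs⟩ := summable_iff_vanishing_norm.1 (hadm w).1 ε hε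
    refine ⟨s.sup id + 1, fun G hG x hx => ?_⟩
    have hdisj : Disjoint G s := by
      rw [Finset.disjoint_left]
      intro a haG has
      have h1 : s.sup id + 1 ≤ a := hG a haG
      have h2 : a ≤ s.sup id := Finset.le_sup (f := id) has
      omega
    have hnrm := (hs G hdisj).le
    have hx1 : (w.toBCF : deletedPlank P → ℂ) x = 1 := hw x hx
    have heq : (∑ i ∈ G, (star (X i) * X i * (star w.toBCF * w.toBCF))) x
        = ((∑ i ∈ G, ‖X i x‖ ^ 2 : ℝ) : ℂ) := by
      rw [hev w.toBCF G x]
      norm_cast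
      refine Finset.sum_congr rfl fun i _ => ?_
      rw [hx1]
      simp
    have hnn : (0:ℝ) ≤ ∑ i ∈ G, ‖X i x‖ ^ 2 :=
      Finset.sum_nonneg fun i _ => by positivity
    calc (∑ i ∈ G, ‖X i x‖ ^ 2)
        = ‖(∑ i ∈ G, (star (X i) * X i * (star w.toBCF * w.toBCF))) x‖ := by
          rw [heq, Complex.norm_real, Real.norm_eq_abs, abs_of_nonneg hnn]
      _ ≤ ‖∑ i ∈ G, (star (X i) * X i * (star w.toBCF * w.toBCF))‖ :=
          BoundedContinuousFunction.norm_coe_le_norm _ x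
      _ ≤ ε := hnrm
  have MAIN := mainLemma hnc hIV X UC
  -- the pointwise bound
  have PW : ∀ t : deletedPlank P, (∑' i : ℕ, ‖X i t‖ ^ 2) ≤ 1 := by
    intro t
    obtain ⟨w, hw⟩ := exists_c0_one_on (isCompact_singleton (x := t))
    have hwt : (w : deletedPlank P → ℂ) t = 1 := hw t rfl
    have h2 := (hadm w).2 t
    rw [hwt] at h2
    simpa using h2
  -- conclusion
  intro v
  constructor
  · rw [summable_iff_vanishing_norm]
    intro ε hε
    obtain ⟨N, hN⟩ := MAIN (ε / (2 * (‖v‖ ^ 2 + 1))) (by positivity)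
    refine ⟨Finset.range N, fun G hGd => ?_⟩
    have hlt : ε / 2 < ε := by linarith
    refine lt_of_le_of_lt ?_ hlt
    rw [BoundedContinuousFunction.norm_le (by positivity)]
    intro y
    rw [hev v G y, Complex.norm_real, Real.norm_eq_abs]
    have hGge : ∀ i ∈ G, N ≤ i := by
      intro i hi
      by_contra h
      exact (Finset.disjoint_left.1 hGd) hi (Finset.mem_range.2 (not_le.1 h))
    have h2 : (∑ i ∈ G, ‖X i y‖ ^ 2) ≤ ε / (2 * (‖v‖ ^ 2 + 1)) := hN G hGge y
    have h3 : ‖v y‖ ^ 2 ≤ ‖v‖ ^ 2 + 1 := by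
      have := BoundedContinuousFunction.norm_coe_le_norm v y
      nlinarith [norm_nonneg (v y)]
    have hnn : (0:ℝ) ≤ ∑ i ∈ G, ‖X i y‖ ^ 2 :=
      Finset.sum_nonneg fun i _ => by positivity
    rw [abs_of_nonneg (by positivity : (0:ℝ) ≤ ∑ i ∈ G, ‖X i y‖ ^ 2 * ‖v y‖ ^ 2)]
    calc (∑ i ∈ G, ‖X i y‖ ^ 2 * ‖v y‖ ^ 2)
        = (∑ i ∈ G, ‖X i y‖ ^ 2) * ‖v y‖ ^ 2 := by rw [Finset.sum_mul]
      _ ≤ (ε / (2 * (‖v‖ ^ 2 + 1))) * (‖v‖ ^ 2 + 1) := by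
          apply mul_le_mul h2 h3 (by positivity) (by positivity)
      _ = ε / 2 := by
          field_simp
  · intro t
    rw [tsum_mul_right]
    calc (∑' i : ℕ, ‖X i t‖ ^ 2) * ‖v t‖ ^ 2
        ≤ 1 * ‖v t‖ ^ 2 := mul_le_mul_of_nonneg_right (PW t) (by positivity)
      _ = ‖v t‖ ^ 2 := one_mul _
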